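/- arXiv:quant-ph/0406139 — 2 statements merged into one kernel-verified Lean document; each statement's English description precedes it below -/
import Mathlib

section
/- Every Bell class state ρ on ℂ^d⊗ℂ^d satisfies: |tr[ρ(W₁⊗W₂)]| ≤ (1/2)·(1 + tr[ρ(W₂⊗W₂)]) and |tr[ρ(W₁⊗W₂)]| ≤ (1/2)·(1 + tr[ρ(W₁⊗W₁)]), for all Hermitian matrices W₁, W₂ on ℂ^d with operator norms at most 1. -/
open Matrix
open scoped Kronecker ComplexOrder

namespace BellPaper

variable {α β γ : Type*} [Fintype α] [Fintype β] [Fintype γ]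

/-- Partial trace over the first factor of a threefold tensor product. -/
noncomputable def ptr1 (T : Matrix ((α × β) × γ) ((α × β) × γ) ℂ) :
    Matrix (β × γ) (β × γ) ℂ :=
  fun p q => ∑ i : α, T ((i, p.1), p.2) ((i, q.1), q.2)

/-- Partial trace over the second factor of a threefold tensor product. -/
noncomputable def ptr2 (T : Matrix ((α × β) × γ) ((α × β) × γ) ℂ) :
    Matrix (α × γ) (α × γ) ℂ :=
  fun p q => ∑ j : β, T ((p.1, j), p.2) ((q.1, j), q.2)

/-- Partial trace over the third factor of a threefold tensor product. -/
noncomputable def ptr3 (T : Matrix ((α × β) × γ) ((α × β) × γ) ℂ) :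
    Matrix (α × β) (α × β) ℂ :=
  fun p q => ∑ k : γ, T (p, k) (q, k)

/-- Partial trace over the second factor of a twofold tensor product. -/
noncomputable def ptrB (M : Matrix (α × β) (α × β) ℂ) : Matrix α α ℂ :=
  fun i i' => ∑ j : β, M (i, j) (i', j)

/-- A density matrix: positive semidefinite with unit trace. -/
def IsDensityMatrix {n : Type*} [Fintype n] (ρ : Matrix n n ℂ) : Prop :=
  ρ.PosSemidef ∧ ρ.trace = 1

/-- Source-operator of type `T₁₂₂` for a state on ℂ^{d₁}⊗ℂ^{d₂}. -/
def IsSource122 {d₁ d₂ : ℕ} (ρ : Matrix (Fin d₁ × Fin d₂) (Fin d₁ × Fin d₂) ℂ)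
    (T : Matrix ((Fin d₁ × Fin d₂) × Fin d₂) ((Fin d₁ × Fin d₂) × Fin d₂) ℂ) : Prop :=
  T.IsHermitian ∧ ptr2 T = ρ ∧ ptr3 T = ρ

/-- Source-operator of type `T₁₁₂` for a state on ℂ^{d₁}⊗ℂ^{d₂}. -/
def IsSource112 {d₁ d₂ : ℕ} (ρ : Matrix (Fin d₁ × Fin d₂) (Fin d₁ × Fin d₂) ℂ)
    (S : Matrix ((Fin d₁ × Fin d₁) × Fin d₂) ((Fin d₁ × Fin d₁) × Fin d₂) ℂ) : Prop :=
  S.IsHermitian ∧ ptr1 S = ρ ∧ ptr2 S = ρ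

/-- A DSO state: a density matrix admitting a positive semidefinite source-operator. -/
def IsDSO {d₁ d₂ : ℕ} (ρ : Matrix (Fin d₁ × Fin d₂) (Fin d₁ × Fin d₂) ℂ) : Prop :=
  IsDensityMatrix ρ ∧
    ((∃ T, T.PosSemidef ∧ IsSource122 ρ T) ∨ (∃ S, S.PosSemidef ∧ IsSource112 ρ S))

/-- A Bell class state: a density matrix admitting a density source-operator with the
special dilation property (all three partial traces equal the state). -/
def IsBellClass {d : ℕ} (ρ : Matrix (Fin d × Fin d) (Fin d × Fin d) ℂ) : Prop :=
  IsDensityMatrix ρ ∧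
    ∃ T : Matrix ((Fin d × Fin d) × Fin d) ((Fin d × Fin d) × Fin d) ℂ,
      T.PosSemidef ∧ ptr1 T = ρ ∧ ptr2 T = ρ ∧ ptr3 T = ρ

/-- The operator (spectral) norm of a matrix acting on a Euclidean space. -/
noncomputable def opNorm {n : Type*} [Fintype n] [DecidableEq n] (W : Matrix n n ℂ) : ℝ :=
  ‖Matrix.toEuclideanCLM (𝕜 := ℂ) W‖

/-- The swap (permutation) operator `V_d` on ℂ^d ⊗ ℂ^d. -/
noncomputable def swapMat (d : ℕ) : Matrix (Fin d × Fin d) (Fin d × Fin d) ℂ :=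
  fun p q => if p.1 = q.2 ∧ p.2 = q.1 then 1 else 0

/-- The Werner state on ℂ^d ⊗ ℂ^d. -/
noncomputable def werner (d : ℕ) : Matrix (Fin d × Fin d) (Fin d × Fin d) ℂ :=
  (((d : ℂ) + 1) / (d : ℂ) ^ 3) • (1 : Matrix (Fin d × Fin d) (Fin d × Fin d) ℂ)
    - ((d : ℂ) ^ 2)⁻¹ • swapMat d

/-- The triple of indices of a point of the threefold product. -/
def triple {d : ℕ} (p : (Fin d × Fin d) × Fin d) : Fin 3 → Fin d := ![p.1.1, p.1.2, p.2]

/-- The unitary permuting the three tensor factors of ℂ^d ⊗ ℂ^d ⊗ ℂ^d according to π. -/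
noncomputable def permMat (d : ℕ) (π : Equiv.Perm (Fin 3)) :
    Matrix ((Fin d × Fin d) × Fin d) ((Fin d × Fin d) × Fin d) ℂ :=
  fun p q => if ∀ i, triple p (π i) = triple q i then 1 else 0

/-- The antisymmetrization projection `Q_d^{(-)}` on ℂ^d ⊗ ℂ^d ⊗ ℂ^d. -/
noncomputable def antisym (d : ℕ) :
    Matrix ((Fin d × Fin d) × Fin d) ((Fin d × Fin d) × Fin d) ℂ :=
  (6 : ℂ)⁻¹ • ∑ π : Equiv.Perm (Fin 3), (((Equiv.Perm.sign π : ℤ) : ℂ)) • permMat d π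

/-- Tensor product of two vectors. -/
def tens {m n : Type*} (u : m → ℂ) (v : n → ℂ) : m × n → ℂ := fun p => u p.1 * v p.2

/-- The rank-one operator |v⟩⟨v|. -/
noncomputable def outer {n : Type*} (v : n → ℂ) : Matrix n n ℂ :=
  Matrix.vecMulVec v (star v)


section Aux


lemma kron_conjTranspose {m n m' n' : Type*} (A : Matrix m n ℂ) (B : Matrix m' n' ℂ) :
    (A ⊗ₖ B)ᴴ = Aᴴ ⊗ₖ Bᴴ := by
  ext ⟨i, j⟩ ⟨i', j'⟩
  simp [conjTranspose_apply, kroneckerMap_apply, mul_comm]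

open scoped MatrixOrder in
lemma posSemidef_iff_eq_transpose_mul_self {n : Type*} [Fintype n] {A : Matrix n n ℂ} :
    A.PosSemidef ↔ ∃ B : Matrix n n ℂ, A = Bᴴ * B := by
  classical
  constructor
  · intro h
    obtain ⟨B, hB⟩ := CStarAlgebra.nonneg_iff_eq_star_mul_self.mp h.nonneg
    exact ⟨B, hB⟩
  · rintro ⟨B, rfl⟩
    exact posSemidef_conjTranspose_mul_self B

lemma psd_kron {m n : Type*} [Fintype m] [Fintype n] {A : Matrix m m ℂ} {B : Matrix n n ℂ}
    (hA : A.PosSemidef) (hB : B.PosSemidef) : (A ⊗ₖ B).PosSemidef := by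
  obtain ⟨A', rfl⟩ := posSemidef_iff_eq_transpose_mul_self.mp hA
  obtain ⟨B', rfl⟩ := posSemidef_iff_eq_transpose_mul_self.mp hB
  rw [mul_kronecker_mul, ← kron_conjTranspose]
  exact posSemidef_conjTranspose_mul_self _

lemma trace_nonneg_of_psd {n : Type*} [Fintype n] {M : Matrix n n ℂ} (h : M.PosSemidef) :
    0 ≤ M.trace := by
  classical
  refine Finset.sum_nonneg fun i _ => ?_
  simpa [dotProduct, Pi.single_apply, Matrix.mulVec] using h.dotProduct_mulVec_nonneg (Pi.single i 1)

lemma trace_mul_nonneg {n : Type*} [Fintype n] {T M : Matrix n n ℂ}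
    (hT : T.PosSemidef) (hM : M.PosSemidef) : 0 ≤ (T * M).trace := by
  obtain ⟨B, rfl⟩ := posSemidef_iff_eq_transpose_mul_self.mp hM
  rw [← Matrix.mul_assoc, trace_mul_comm]
  exact trace_nonneg_of_psd (by simpa [Matrix.mul_assoc] using hT.mul_mul_conjTranspose_same B)

lemma quad_eq_inner {n : Type*} [Fintype n] [DecidableEq n] (W : Matrix n n ℂ) (x : n → ℂ) :
    star x ⬝ᵥ W *ᵥ x
      = inner ℂ (WithLp.toLp 2 x) (toEuclideanCLM (𝕜 := ℂ) W (WithLp.toLp 2 x)) := by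
  rw [toEuclideanCLM_toLp, EuclideanSpace.inner_toLp_toLp, dotProduct_comm]

lemma quad_im_zero {n : Type*} [Fintype n] [DecidableEq n] {W : Matrix n n ℂ}
    (hW : W.IsHermitian) (x : n → ℂ) : (star x ⬝ᵥ W *ᵥ x).im = 0 := by
  rw [quad_eq_inner]
  set y := WithLp.toLp 2 x
  have hsym := (isHermitian_iff_isSymmetric.mp hW)
  have h1 : (starRingEnd ℂ) (inner ℂ y (toEuclideanCLM (𝕜 := ℂ) W y) : ℂ)
      = inner ℂ y (toEuclideanCLM (𝕜 := ℂ) W y) := by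
    rw [inner_conj_symm]
    have := hsym y y
    exact this
  exact Complex.conj_eq_iff_im.mp h1

lemma psd_one_add_one_sub {n : Type*} [Fintype n] [DecidableEq n] {W : Matrix n n ℂ}
    (hW : W.IsHermitian) (hn : opNorm W ≤ 1) :
    (1 + W).PosSemidef ∧ (1 - W).PosSemidef := by
  have key : ∀ x : n → ℂ, ‖star x ⬝ᵥ W *ᵥ x‖ ≤ (star x ⬝ᵥ x).re := by
    intro x
    rw [quad_eq_inner]
    set y := WithLp.toLp 2 x with hy
    have h1 : ‖(inner ℂ y (toEuclideanCLM (𝕜 := ℂ) W y) : ℂ)‖ ≤ ‖y‖ * ‖y‖ := by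
      calc ‖(inner ℂ y (toEuclideanCLM (𝕜 := ℂ) W y) : ℂ)‖
          ≤ ‖y‖ * ‖toEuclideanCLM (𝕜 := ℂ) W y‖ := by
            exact
              norm_inner_le_norm (𝕜 := ℂ) y (toEuclideanCLM (𝕜 := ℂ) W y)
        _ ≤ ‖y‖ * (‖toEuclideanCLM (𝕜 := ℂ) W‖ * ‖y‖) := by
            gcongr
            exact (toEuclideanCLM (𝕜 := ℂ) W).le_opNorm y
        _ ≤ ‖y‖ * (1 * ‖y‖) := by gcongr; exact hn
        _ = ‖y‖ * ‖y‖ := by ring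
    have h3 : (star x ⬝ᵥ x).re = ‖y‖ * ‖y‖ := by
      rw [show star x ⬝ᵥ x = (inner ℂ y y : ℂ) by rw [EuclideanSpace.inner_toLp_toLp, dotProduct_comm],
        inner_self_eq_norm_sq_to_K (𝕜 := ℂ)]
      simp [pow_two, RCLike.mul_re]
    rw [h3]; exact h1
  have him : ∀ x : n → ℂ, (star x ⬝ᵥ x).im = 0 := fun x => by
    simpa [Matrix.one_mulVec] using quad_im_zero (isHermitian_one (n := n) (α := ℂ)) x
  constructor
  · refine PosSemidef.of_dotProduct_mulVec_nonneg ((isHermitian_one).add hW) fun x => ?_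
    rw [Matrix.add_mulVec, Matrix.one_mulVec, dotProduct_add]
    rw [Complex.le_def]
    constructor
    · simp only [Complex.zero_re, Complex.add_re]
      have := key x
      have h2 := (Complex.abs_re_le_norm (star x ⬝ᵥ W *ᵥ x))
      have h4 := neg_abs_le (star x ⬝ᵥ W *ᵥ x).re
      have h5 := le_abs_self (star x ⬝ᵥ W *ᵥ x).re
      linarith
    · simp only [Complex.zero_im, Complex.add_im, him x, quad_im_zero hW x, add_zero]
  · refine PosSemidef.of_dotProduct_mulVec_nonneg ((isHermitian_one).sub hW) fun x => ?_
    rw [Matrix.sub_mulVec, Matrix.one_mulVec, dotProduct_sub]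
    rw [Complex.le_def]
    constructor
    · simp only [Complex.zero_re, Complex.sub_re]
      have := key x
      have h2 := (Complex.abs_re_le_norm (star x ⬝ᵥ W *ᵥ x))
      have h4 := neg_abs_le (star x ⬝ᵥ W *ᵥ x).re
      have h5 := le_abs_self (star x ⬝ᵥ W *ᵥ x).re
      linarith
    · simp only [Complex.zero_im, Complex.sub_im, him x, quad_im_zero hW x, sub_zero]

lemma trace_mul_sum {ι : Type*} [Fintype ι] (A B : Matrix ι ι ℂ) :
    (A * B).trace = ∑ p : ι, ∑ q : ι, A p q * B q p := by
  simp [Matrix.trace, Matrix.mul_apply, Matrix.diag]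


lemma tr3 [DecidableEq γ] (T : Matrix ((α × β) × γ) ((α × β) × γ) ℂ) (X : Matrix α α ℂ) (Y : Matrix β β ℂ) :
    (T * ((X ⊗ₖ Y) ⊗ₖ (1 : Matrix γ γ ℂ))).trace = (ptr3 T * (X ⊗ₖ Y)).trace := by
  simp only [trace_mul_sum, ptr3, kroneckerMap_apply, Matrix.one_apply,
    Fintype.sum_prod_type, mul_ite, mul_one, mul_zero, Finset.sum_ite_eq',
    Finset.mem_univ, if_true, Finset.sum_mul]
  refine Finset.sum_congr rfl fun i _ => Finset.sum_congr rfl fun j _ => ?_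
  rw [Finset.sum_comm]
  refine Finset.sum_congr rfl fun i' _ => ?_
  rw [Finset.sum_comm]

lemma tr2 [DecidableEq β] (T : Matrix ((α × β) × γ) ((α × β) × γ) ℂ) (X : Matrix α α ℂ) (Z : Matrix γ γ ℂ) :
    (T * ((X ⊗ₖ (1 : Matrix β β ℂ)) ⊗ₖ Z)).trace = (ptr2 T * (X ⊗ₖ Z)).trace := by
  simp only [trace_mul_sum, ptr2, kroneckerMap_apply, Matrix.one_apply,
    Fintype.sum_prod_type, mul_ite, mul_one, mul_zero, ite_mul, zero_mul,
    Finset.sum_ite_irrel, Finset.sum_const_zero,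
    Finset.sum_ite_eq', Finset.mem_univ, if_true, Finset.sum_mul]
  refine Finset.sum_congr rfl fun i _ => ?_
  rw [Finset.sum_comm]
  refine Finset.sum_congr rfl fun k _ => ?_
  rw [Finset.sum_comm]
  refine Finset.sum_congr rfl fun i' _ => ?_
  rw [Finset.sum_comm]

lemma tr1 [DecidableEq α] (T : Matrix ((α × β) × γ) ((α × β) × γ) ℂ) (Y : Matrix β β ℂ) (Z : Matrix γ γ ℂ) :
    (T * (((1 : Matrix α α ℂ) ⊗ₖ Y) ⊗ₖ Z)).trace = (ptr1 T * (Y ⊗ₖ Z)).trace := by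
  simp only [trace_mul_sum, ptr1, kroneckerMap_apply, Matrix.one_apply,
    Fintype.sum_prod_type, mul_ite, mul_one, mul_zero, ite_mul, zero_mul,
    Finset.sum_ite_irrel, Finset.sum_const_zero,
    Finset.sum_ite_eq', Finset.mem_univ, if_true, Finset.sum_mul, one_mul]
  rw [Finset.sum_comm]
  refine Finset.sum_congr rfl fun j _ => ?_
  rw [Finset.sum_comm]
  refine Finset.sum_congr rfl fun k _ => ?_
  rw [Finset.sum_comm]
  refine Finset.sum_congr rfl fun j' _ => ?_
  rw [Finset.sum_comm]

lemma trace_mul_herm_im_zero {n : Type*} [Fintype n] {A B : Matrix n n ℂ}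
    (hA : A.IsHermitian) (hB : B.IsHermitian) : ((A * B).trace).im = 0 := by
  have h : star ((A * B).trace) = (A * B).trace := by
    rw [← Matrix.trace_conjTranspose, Matrix.conjTranspose_mul, hA.eq, hB.eq, trace_mul_comm]
  exact Complex.conj_eq_iff_im.mp h

end Aux

/-- the inequalities (34) for a Bell class state. -/
theorem bell_class_single_product_bounds {d : ℕ}
    (ρ : Matrix (Fin d × Fin d) (Fin d × Fin d) ℂ) (hρ : IsBellClass ρ)
    (W₁ W₂ : Matrix (Fin d) (Fin d) ℂ)
    (hW₁ : W₁.IsHermitian) (hW₂ : W₂.IsHermitian)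
    (hn₁ : opNorm W₁ ≤ 1) (hn₂ : opNorm W₂ ≤ 1) :
    ‖(ρ * (W₁ ⊗ₖ W₂)).trace‖
      ≤ (1 / 2) * (1 + ((ρ * (W₂ ⊗ₖ W₂)).trace).re)
    ∧ ‖(ρ * (W₁ ⊗ₖ W₂)).trace‖
      ≤ (1 / 2) * (1 + ((ρ * (W₁ ⊗ₖ W₁)).trace).re) := by
  obtain ⟨⟨hpsd, htr⟩, T, hT, h1, h2, h3⟩ := hρ
  obtain ⟨hp₁, hm₁⟩ := psd_one_add_one_sub hW₁ hn₁
  obtain ⟨hp₂, hm₂⟩ := psd_one_add_one_sub hW₂ hn₂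
  set t := (ρ * (W₁ ⊗ₖ W₂)).trace with ht
  set s := (ρ * (W₂ ⊗ₖ W₂)).trace with hs
  set u := (ρ * (W₁ ⊗ₖ W₁)).trace with hu
  -- trace computations
  have e0 : (T * (((1 : Matrix (Fin d) (Fin d) ℂ) ⊗ₖ (1 : Matrix (Fin d) (Fin d) ℂ)) ⊗ₖ
      (1 : Matrix (Fin d) (Fin d) ℂ))).trace = 1 := by
    rw [tr3, h3, one_kronecker_one, mul_one, htr]
  have eA : (T * (((1 : Matrix (Fin d) (Fin d) ℂ) ⊗ₖ W₂) ⊗ₖ W₂)).trace = s := by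
    rw [tr1, h1]
  have eB : (T * ((W₁ ⊗ₖ (1 : Matrix (Fin d) (Fin d) ℂ)) ⊗ₖ W₂)).trace = t := by
    rw [tr2, h2]
  have eC : (T * ((W₁ ⊗ₖ W₂) ⊗ₖ (1 : Matrix (Fin d) (Fin d) ℂ))).trace = t := by
    rw [tr3, h3]
  have eD : (T * ((W₁ ⊗ₖ W₁) ⊗ₖ (1 : Matrix (Fin d) (Fin d) ℂ))).trace = u := by
    rw [tr3, h3]
  have eE : (T * (((1 : Matrix (Fin d) (Fin d) ℂ) ⊗ₖ W₁) ⊗ₖ W₂)).trace = t := by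
    rw [tr1, h1]
  -- main inequality generator
  have gen : ∀ (P : Matrix ((Fin d × Fin d) × Fin d) ((Fin d × Fin d) × Fin d) ℂ),
      P.PosSemidef → 0 ≤ ((T * P).trace).re := by
    intro P hP
    have := trace_mul_nonneg hT hP
    exact (Complex.le_def.mp this).1
  -- first inequality, minus sign
  have key1 : 2 * t.re ≤ 1 + s.re := by
    have hP := ((psd_kron (psd_kron hp₁ hm₂) hm₂).add (psd_kron (psd_kron hm₁ hp₂) hp₂))
    have hexp : ((1 + W₁) ⊗ₖ (1 - W₂)) ⊗ₖ (1 - W₂) + ((1 - W₁) ⊗ₖ (1 + W₂)) ⊗ₖ (1 + W₂)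
        = (2:ℂ) • (((1 : Matrix (Fin d) (Fin d) ℂ) ⊗ₖ (1 : Matrix (Fin d) (Fin d) ℂ)) ⊗ₖ (1 : Matrix (Fin d) (Fin d) ℂ))
          + (2:ℂ) • (((1 : Matrix (Fin d) (Fin d) ℂ) ⊗ₖ W₂) ⊗ₖ W₂)
          - (2:ℂ) • ((W₁ ⊗ₖ (1 : Matrix (Fin d) (Fin d) ℂ)) ⊗ₖ W₂)
          - (2:ℂ) • ((W₁ ⊗ₖ W₂) ⊗ₖ (1 : Matrix (Fin d) (Fin d) ℂ)) := by
      ext ⟨⟨i, j⟩, k⟩ ⟨⟨i', j'⟩, k'⟩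
      simp only [Matrix.add_apply, Matrix.sub_apply, Matrix.smul_apply, kroneckerMap_apply,
        smul_eq_mul]
      ring
    have h0 := gen _ (hexp ▸ hP)
    simp only [Matrix.mul_add, Matrix.mul_sub, Matrix.mul_smul, Matrix.trace_add,
      Matrix.trace_sub, Matrix.trace_smul, e0, eA, eB, eC, smul_eq_mul] at h0
    simp only [Complex.add_re, Complex.sub_re, Complex.mul_re, Complex.re_ofNat,
      Complex.im_ofNat, Complex.one_re, Complex.one_im, Complex.zero_re] at h0
    linarith
  have key2 : -(2 * t.re) ≤ 1 + s.re := by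
    have hP := ((psd_kron (psd_kron hm₁ hm₂) hm₂).add (psd_kron (psd_kron hp₁ hp₂) hp₂))
    have hexp : ((1 - W₁) ⊗ₖ (1 - W₂)) ⊗ₖ (1 - W₂) + ((1 + W₁) ⊗ₖ (1 + W₂)) ⊗ₖ (1 + W₂)
        = (2:ℂ) • (((1 : Matrix (Fin d) (Fin d) ℂ) ⊗ₖ (1 : Matrix (Fin d) (Fin d) ℂ)) ⊗ₖ (1 : Matrix (Fin d) (Fin d) ℂ))
          + (2:ℂ) • (((1 : Matrix (Fin d) (Fin d) ℂ) ⊗ₖ W₂) ⊗ₖ W₂)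
          + (2:ℂ) • ((W₁ ⊗ₖ (1 : Matrix (Fin d) (Fin d) ℂ)) ⊗ₖ W₂)
          + (2:ℂ) • ((W₁ ⊗ₖ W₂) ⊗ₖ (1 : Matrix (Fin d) (Fin d) ℂ)) := by
      ext ⟨⟨i, j⟩, k⟩ ⟨⟨i', j'⟩, k'⟩
      simp only [Matrix.add_apply, Matrix.sub_apply, Matrix.smul_apply, kroneckerMap_apply,
        smul_eq_mul]
      ring
    have h0 := gen _ (hexp ▸ hP)
    simp only [Matrix.mul_add, Matrix.mul_smul, Matrix.trace_add, Matrix.trace_smul,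
      e0, eA, eB, eC, smul_eq_mul] at h0
    simp only [Complex.add_re, Complex.mul_re, Complex.re_ofNat, Complex.im_ofNat,
      Complex.one_re, Complex.one_im, Complex.zero_re] at h0
    linarith
  have key3 : 2 * t.re ≤ 1 + u.re := by
    have hP := ((psd_kron (psd_kron hm₁ hm₁) hp₂).add (psd_kron (psd_kron hp₁ hp₁) hm₂))
    have hexp : ((1 - W₁) ⊗ₖ (1 - W₁)) ⊗ₖ (1 + W₂) + ((1 + W₁) ⊗ₖ (1 + W₁)) ⊗ₖ (1 - W₂)
        = (2:ℂ) • (((1 : Matrix (Fin d) (Fin d) ℂ) ⊗ₖ (1 : Matrix (Fin d) (Fin d) ℂ)) ⊗ₖ (1 : Matrix (Fin d) (Fin d) ℂ))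
          + (2:ℂ) • ((W₁ ⊗ₖ W₁) ⊗ₖ (1 : Matrix (Fin d) (Fin d) ℂ))
          - (2:ℂ) • ((W₁ ⊗ₖ (1 : Matrix (Fin d) (Fin d) ℂ)) ⊗ₖ W₂)
          - (2:ℂ) • (((1 : Matrix (Fin d) (Fin d) ℂ) ⊗ₖ W₁) ⊗ₖ W₂) := by
      ext ⟨⟨i, j⟩, k⟩ ⟨⟨i', j'⟩, k'⟩
      simp only [Matrix.add_apply, Matrix.sub_apply, Matrix.smul_apply, kroneckerMap_apply,
        smul_eq_mul]
      ring
    have h0 := gen _ (hexp ▸ hP)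
    simp only [Matrix.mul_add, Matrix.mul_sub, Matrix.mul_smul, Matrix.trace_add,
      Matrix.trace_sub, Matrix.trace_smul, e0, eD, eB, eE, smul_eq_mul] at h0
    simp only [Complex.add_re, Complex.sub_re, Complex.mul_re, Complex.re_ofNat,
      Complex.im_ofNat, Complex.one_re, Complex.one_im, Complex.zero_re] at h0
    linarith
  have key4 : -(2 * t.re) ≤ 1 + u.re := by
    have hP := ((psd_kron (psd_kron hm₁ hm₁) hm₂).add (psd_kron (psd_kron hp₁ hp₁) hp₂))
    have hexp : ((1 - W₁) ⊗ₖ (1 - W₁)) ⊗ₖ (1 - W₂) + ((1 + W₁) ⊗ₖ (1 + W₁)) ⊗ₖ (1 + W₂)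
        = (2:ℂ) • (((1 : Matrix (Fin d) (Fin d) ℂ) ⊗ₖ (1 : Matrix (Fin d) (Fin d) ℂ)) ⊗ₖ (1 : Matrix (Fin d) (Fin d) ℂ))
          + (2:ℂ) • ((W₁ ⊗ₖ W₁) ⊗ₖ (1 : Matrix (Fin d) (Fin d) ℂ))
          + (2:ℂ) • ((W₁ ⊗ₖ (1 : Matrix (Fin d) (Fin d) ℂ)) ⊗ₖ W₂)
          + (2:ℂ) • (((1 : Matrix (Fin d) (Fin d) ℂ) ⊗ₖ W₁) ⊗ₖ W₂) := by
      ext ⟨⟨i, j⟩, k⟩ ⟨⟨i', j'⟩, k'⟩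
      simp only [Matrix.add_apply, Matrix.sub_apply, Matrix.smul_apply, kroneckerMap_apply,
        smul_eq_mul]
      ring
    have h0 := gen _ (hexp ▸ hP)
    simp only [Matrix.mul_add, Matrix.mul_smul, Matrix.trace_add, Matrix.trace_smul,
      e0, eD, eB, eE, smul_eq_mul] at h0
    simp only [Complex.add_re, Complex.mul_re, Complex.re_ofNat, Complex.im_ofNat,
      Complex.one_re, Complex.one_im, Complex.zero_re] at h0
    linarith
  -- t is real
  have hherm : (W₁ ⊗ₖ W₂).IsHermitian := by
    unfold Matrix.IsHermitian
    rw [kron_conjTranspose, hW₁.eq, hW₂.eq]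
  have htim : t.im = 0 := trace_mul_herm_im_zero hpsd.1 hherm
  have habs : ‖t‖ = |t.re| := by
    rw [show t = (t.re : ℂ) from Complex.ext rfl (by simp [htim])]
    rw [Complex.norm_real, Real.norm_eq_abs, Complex.ofReal_re]
  rw [ht] at habs
  constructor
  · rw [habs, abs_le]; constructor <;> [linarith [key2]; linarith [key1]]
  · rw [habs, abs_le]; constructor <;> [linarith [key4]; linarith [key3]]

end BellPaper
end

section
/- Let ρ be a density matrix on ℂ^{d₁}⊗ℂ^{d₂}, and let γ_{nm} (n,m = 1,2) be real numbers with |γ_{nm}| ≤ 1. For all Hermitian matrices A₁, A₂ on ℂ^{d₁} and B₁, B₂ on ℂ^{d₂} with operator norms at most 1: if γ₁₁γ₁₂ = −γ₂₁γ₂₂ and T is a source-operator of type T₁₂₂ for ρ, then |Σ_{n,m} γ_{nm} tr[ρ(A_n⊗B_m)]| ≤ 2‖T‖₁; and if γ₁₁γ₂₁ = −γ₁₂γ₂₂ and S is a source-operator of type T₁₁₂ for ρ, then |Σ_{n,m} γ_{nm} tr[ρ(A_n⊗B_m)]| ≤ 2‖S‖₁. -/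
open Matrix
open scoped Kronecker ComplexOrder

namespace BellPaper

variable {α β γ : Type*} [Fintype α] [Fintype β] [Fintype γ]

/-! ### Auxiliary lemmas for the proof of the CHSH-form inequalities -/

section Helpers

lemma chsh_scalar {p q r s : ℝ} (hp : |p| ≤ 1) (hq : |q| ≤ 1) (hr : |r| ≤ 1)
    (hs : |s| ≤ 1) (h : p * q = -(r * s)) : |p + q| + |r + s| ≤ 2 := by
  rcases abs_le.mp hp with ⟨hp1, hp2⟩
  rcases abs_le.mp hq with ⟨hq1, hq2⟩
  rcases abs_le.mp hr with ⟨hr1, hr2⟩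
  rcases abs_le.mp hs with ⟨hs1, hs2⟩
  rcases abs_cases (p + q) with ⟨h1, _⟩ | ⟨h1, _⟩ <;>
    rcases abs_cases (r + s) with ⟨h2, _⟩ | ⟨h2, _⟩ <;> rw [h1, h2] <;>
    nlinarith [mul_nonneg (by linarith : (0:ℝ) ≤ 1 - p) (by linarith : (0:ℝ) ≤ 1 - q),
      mul_nonneg (by linarith : (0:ℝ) ≤ 1 + p) (by linarith : (0:ℝ) ≤ 1 + q),
      mul_nonneg (by linarith : (0:ℝ) ≤ 1 - r) (by linarith : (0:ℝ) ≤ 1 - s),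
      mul_nonneg (by linarith : (0:ℝ) ≤ 1 + r) (by linarith : (0:ℝ) ≤ 1 + s)]

lemma bracket_bound (a b : ℝ) (q₁ q₂ : ℂ) (nnr : ℝ)
    (h₁i : q₁.im = 0) (h₁r : |q₁.re| ≤ nnr)
    (h₂i : q₂.im = 0) (h₂r : |q₂.re| ≤ nnr)
    (hab : |a| + |b| ≤ 2) :
    ‖(a : ℂ) * q₁ + (b : ℂ) * q₂‖ ≤ 2 * nnr := by
  have heq : (a : ℂ) * q₁ + (b : ℂ) * q₂ = ((a * q₁.re + b * q₂.re : ℝ) : ℂ) := by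
    apply Complex.ext <;> simp [Complex.mul_re, Complex.mul_im, h₁i, h₂i]
  rw [heq, Complex.norm_real, Real.norm_eq_abs]
  have h0 : 0 ≤ nnr := le_trans (abs_nonneg _) h₁r
  have habs := abs_add_le (a * q₁.re) (b * q₂.re)
  rw [abs_mul, abs_mul] at habs
  nlinarith [abs_nonneg a, abs_nonneg b,
    mul_le_mul_of_nonneg_left h₁r (abs_nonneg a),
    mul_le_mul_of_nonneg_left h₂r (abs_nonneg b)]

lemma quadform_bounds {n : Type*} [Fintype n] [DecidableEq n] {A : Matrix n n ℂ}
    (hA : A.IsHermitian) (hn : opNorm A ≤ 1) (v : n → ℂ) :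
    (star v ⬝ᵥ (A *ᵥ v)).im = 0 ∧ |(star v ⬝ᵥ (A *ᵥ v)).re| ≤ (star v ⬝ᵥ v).re := by
  set x : EuclideanSpace ℂ n := (WithLp.equiv 2 _).symm v with hx
  have hxA : Matrix.toEuclideanCLM (𝕜 := ℂ) A x = (WithLp.equiv 2 _).symm (A *ᵥ v) := by
    rw [hx]; rfl
  have key : star v ⬝ᵥ (A *ᵥ v) = inner (𝕜 := ℂ) x (Matrix.toEuclideanCLM (𝕜 := ℂ) A x) := by
    rw [hxA, hx, EuclideanSpace.inner_eq_star_dotProduct]; exact dotProduct_comm _ _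
  have keyn : star v ⬝ᵥ v = inner (𝕜 := ℂ) x x := by
    rw [hx, EuclideanSpace.inner_eq_star_dotProduct]; exact dotProduct_comm _ _
  have hsa : star (Matrix.toEuclideanCLM (𝕜 := ℂ) A) = Matrix.toEuclideanCLM (𝕜 := ℂ) A := by
    rw [← map_star, show star A = A from hA]
  set T := Matrix.toEuclideanCLM (𝕜 := ℂ) A with hT
  have hreal : (inner (𝕜 := ℂ) x (T x)) = (starRingEnd ℂ) (inner (𝕜 := ℂ) x (T x)) := by
    rw [inner_conj_symm]
    conv_lhs => rw [← hsa]
    rw [ContinuousLinearMap.star_eq_adjoint, ContinuousLinearMap.adjoint_inner_right]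
  constructor
  · rw [key]
    have := congrArg Complex.im hreal
    simp only [Complex.conj_im] at this
    linarith
  · rw [key, keyn]
    have h1 : |(inner (𝕜 := ℂ) x (T x)).re| ≤ ‖(inner (𝕜 := ℂ) x (T x) : ℂ)‖ :=
      Complex.abs_re_le_norm _
    have h2 : ‖(inner (𝕜 := ℂ) x (T x) : ℂ)‖ ≤ ‖x‖ * ‖T x‖ := norm_inner_le_norm _ _
    have h3 : ‖T x‖ ≤ ‖T‖ * ‖x‖ := T.le_opNorm x
    have h4 : (inner (𝕜 := ℂ) x x).re = ‖x‖ ^ 2 := by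
      rw [inner_self_eq_norm_sq_to_K]
      norm_cast
    rw [h4]
    have hTn : ‖T‖ ≤ 1 := hn
    nlinarith [norm_nonneg x, norm_nonneg (T x)]

lemma dot_self_real {n : Type*} [Fintype n] (v : n → ℂ) :
    (star v ⬝ᵥ v).im = 0 ∧ 0 ≤ (star v ⬝ᵥ v).re := by
  have h : star v ⬝ᵥ v = ∑ i, ((Complex.normSq (v i) : ℝ) : ℂ) := by
    simp only [dotProduct, Pi.star_apply, RCLike.star_def]
    exact Finset.sum_congr rfl fun i _ => (Complex.normSq_eq_conj_mul_self).symm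
  rw [h, Complex.im_sum, Complex.re_sum]
  constructor
  · simp
  · simp only [Complex.ofReal_re]
    exact Finset.sum_nonneg fun i _ => Complex.normSq_nonneg _

lemma quad_col {n : Type*} [Fintype n] (B U : Matrix n n ℂ) (j : n) :
    star (fun a => U a j) ⬝ᵥ (B *ᵥ fun a => U a j) = (Uᴴ * B * U) j j := by
  simp only [dotProduct, mulVec, Matrix.mul_apply, conjTranspose_apply, Pi.star_apply,
    Finset.sum_mul, Finset.mul_sum]
  rw [Finset.sum_comm]
  refine Finset.sum_congr rfl fun a _ => Finset.sum_congr rfl fun b _ => by ring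

lemma col_norm {n : Type*} [Fintype n] (U : Matrix n n ℂ) (j : n) :
    star (fun a => U a j) ⬝ᵥ (fun a => U a j) = (Uᴴ * U) j j := by
  simp only [dotProduct, Matrix.mul_apply, conjTranspose_apply, Pi.star_apply]

lemma trace_bound {n : Type*} [Fintype n] [DecidableEq n] (T Tabs X : Matrix n n ℂ)
    (hT : T.IsHermitian) (hTabs : Tabs.PosSemidef) (hsq : Tabs * Tabs = T * T)
    (hX : ∀ v : n → ℂ, ‖star v ⬝ᵥ (X *ᵥ v)‖ ≤ 2 * (star v ⬝ᵥ v).re) :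
    ‖(T * X).trace‖ ≤ 2 * Tabs.trace.re := by
  set U : Matrix n n ℂ := (hT.eigenvectorUnitary : Matrix n n ℂ) with hUdef
  set e := hT.eigenvalues with he
  have hUU : Uᴴ * U = 1 := by
    rw [← Matrix.star_eq_conjTranspose]
    exact ((Unitary.mem_iff).mp hT.eigenvectorUnitary.2).1
  have hUUt : U * Uᴴ = 1 := by
    rw [← Matrix.star_eq_conjTranspose]
    exact ((Unitary.mem_iff).mp hT.eigenvectorUnitary.2).2
  have hspec : T = U * Matrix.diagonal (fun j => ((e j : ℝ) : ℂ)) * Uᴴ := by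
    rw [← Matrix.star_eq_conjTranspose]
    exact hT.spectral_theorem
  set V := U * Matrix.diagonal (fun j => ((|e j| : ℝ) : ℂ)) * Uᴴ with hVdef
  have hdiagpsd : (Matrix.diagonal (fun j => ((|e j| : ℝ) : ℂ))).PosSemidef := by
    refine Matrix.PosSemidef.diagonal fun j => ?_
    show (0 : ℂ) ≤ ((|e j| : ℝ) : ℂ)
    rw [Complex.zero_le_real]
    exact abs_nonneg _
  have hVpsd : V.PosSemidef := by
    have := hdiagpsd.mul_mul_conjTranspose_same U
    simpa [hVdef, Matrix.mul_assoc] using this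
  have hprod : ∀ D E : Matrix n n ℂ, (U * D * Uᴴ) * (U * E * Uᴴ) = U * (D * E) * Uᴴ := by
    intro D E
    calc (U * D * Uᴴ) * (U * E * Uᴴ) = U * D * (Uᴴ * U) * E * Uᴴ := by
          simp only [Matrix.mul_assoc]
      _ = U * (D * E) * Uᴴ := by rw [hUU]; simp only [Matrix.mul_one, Matrix.mul_assoc]
  have hVsq : V * V = T * T := by
    rw [hVdef, hspec, hprod, hprod, Matrix.diagonal_mul_diagonal, Matrix.diagonal_mul_diagonal]
    have heq : (fun i => ((|e i| : ℝ) : ℂ) * ((|e i| : ℝ) : ℂ))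
        = fun i => ((e i : ℝ) : ℂ) * ((e i : ℝ) : ℂ) := by
      funext i
      rw [← Complex.ofReal_mul, ← Complex.ofReal_mul, abs_mul_abs_self]
    rw [heq]
  have hTV : Tabs = V := by
    open scoped MatrixOrder in
    exact (CFC.sq_eq_sq_iff Tabs V hTabs.nonneg hVpsd.nonneg).mp (by rw [pow_two, pow_two, hsq, hVsq])
  have htrV : Tabs.trace.re = ∑ j, |e j| := by
    rw [hTV, hVdef, Matrix.trace_mul_cycle, hUU, Matrix.one_mul, Matrix.trace_diagonal,
      Complex.re_sum]
    simp
  set Y := Uᴴ * X * U with hY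
  have htrTX : (T * X).trace = ∑ j, ((e j : ℝ) : ℂ) * Y j j := by
    have h1 : U * (Matrix.diagonal (fun j => ((e j : ℝ) : ℂ)) * Y) * Uᴴ = T * X := by
      rw [hspec, hY]
      simp only [Matrix.mul_assoc]
      rw [hUUt, Matrix.mul_one]
    rw [← h1, Matrix.trace_mul_cycle, ← Matrix.mul_assoc, hUU, Matrix.one_mul]
    simp only [Matrix.trace, Matrix.diag, Matrix.diagonal_mul]
  have hYjj : ∀ j, ‖Y j j‖ ≤ 2 := by
    intro j
    have h1 : Y j j = star (fun a => U a j) ⬝ᵥ (X *ᵥ fun a => U a j) := (quad_col X U j).symm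
    have h2 : star (fun a => U a j) ⬝ᵥ (fun a => U a j) = 1 := by
      rw [col_norm, hUU, Matrix.one_apply_eq]
    have := hX (fun a => U a j)
    rw [← h1, h2] at this
    simpa using this
  rw [htrTX, htrV]
  calc ‖∑ j, ((e j : ℝ) : ℂ) * Y j j‖
      ≤ ∑ j, ‖((e j : ℝ) : ℂ) * Y j j‖ := norm_sum_le _ _
    _ ≤ ∑ j, |e j| * 2 := by
        refine Finset.sum_le_sum fun j _ => ?_
        rw [norm_mul, Complex.norm_real, Real.norm_eq_abs]
        exact mul_le_mul_of_nonneg_left (hYjj j) (abs_nonneg _)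
    _ = 2 * ∑ j, |e j| := by rw [← Finset.sum_mul, mul_comm]

end Helpers

section KronHelpers

variable {ι κ μ : Type*} [Fintype ι] [Fintype κ] [Fintype μ]
variable [DecidableEq ι] [DecidableEq κ] [DecidableEq μ]

lemma kron_conjT {l m p q : Type*} (A : Matrix l m ℂ) (B : Matrix p q ℂ) :
    (A ⊗ₖ B)ᴴ = Aᴴ ⊗ₖ Bᴴ := by
  ext ⟨i, j⟩ ⟨k, l'⟩
  simp only [conjTranspose_apply, kroneckerMap_apply, star_mul', mul_comm]

lemma conj_kron (V₁ P : Matrix ι ι ℂ) (V₂ Q : Matrix κ κ ℂ) (V₃ R : Matrix μ μ ℂ) :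
    ((V₁ ⊗ₖ V₂) ⊗ₖ V₃)ᴴ * ((P ⊗ₖ Q) ⊗ₖ R) * ((V₁ ⊗ₖ V₂) ⊗ₖ V₃)
      = ((V₁ᴴ * P * V₁) ⊗ₖ (V₂ᴴ * Q * V₂)) ⊗ₖ (V₃ᴴ * R * V₃) := by
  rw [kron_conjT, kron_conjT, ← Matrix.mul_kronecker_mul, ← Matrix.mul_kronecker_mul,
    ← Matrix.mul_kronecker_mul, ← Matrix.mul_kronecker_mul]

lemma kron_unitary (V₁ : Matrix ι ι ℂ) (V₂ : Matrix κ κ ℂ) (V₃ : Matrix μ μ ℂ)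
    (h₁ : V₁ * V₁ᴴ = 1) (h₂ : V₂ * V₂ᴴ = 1) (h₃ : V₃ * V₃ᴴ = 1) :
    ((V₁ ⊗ₖ V₂) ⊗ₖ V₃) * ((V₁ ⊗ₖ V₂) ⊗ₖ V₃)ᴴ = 1 := by
  rw [kron_conjT, kron_conjT, ← Matrix.mul_kronecker_mul, ← Matrix.mul_kronecker_mul,
    h₁, h₂, h₃, Matrix.one_kronecker_one, Matrix.one_kronecker_one]

lemma unconj {n : Type*} [Fintype n] [DecidableEq n] (W X M : Matrix n n ℂ)
    (hW : W * Wᴴ = 1) (h : Wᴴ * X * W = M) : X = W * M * Wᴴ := by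
  rw [← h]
  calc X = (W * Wᴴ) * X * (W * Wᴴ) := by rw [hW, Matrix.one_mul, Matrix.mul_one]
    _ = W * (Wᴴ * X * W) * Wᴴ := by simp only [Matrix.mul_assoc]

lemma quad_all {n : Type*} [Fintype n] [DecidableEq n] (X M W : Matrix n n ℂ)
    (hW : W * Wᴴ = 1) (hM : X = W * M * Wᴴ)
    (h : ∀ u : n → ℂ, ‖star u ⬝ᵥ (M *ᵥ u)‖ ≤ 2 * (star u ⬝ᵥ u).re) :
    ∀ v : n → ℂ, ‖star v ⬝ᵥ (X *ᵥ v)‖ ≤ 2 * (star v ⬝ᵥ v).re := by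
  intro v
  have key : star v ⬝ᵥ (X *ᵥ v) = star (Wᴴ *ᵥ v) ⬝ᵥ (M *ᵥ (Wᴴ *ᵥ v)) := by
    rw [hM, Matrix.star_mulVec, Matrix.conjTranspose_conjTranspose]
    rw [← Matrix.mulVec_mulVec, ← Matrix.mulVec_mulVec, Matrix.dotProduct_mulVec]
  have keyn : star v ⬝ᵥ v = star (Wᴴ *ᵥ v) ⬝ᵥ (Wᴴ *ᵥ v) := by
    rw [Matrix.star_mulVec, Matrix.conjTranspose_conjTranspose, Matrix.dotProduct_mulVec,
      Matrix.vecMul_vecMul, hW, Matrix.vecMul_one]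
  rw [key, keyn]
  exact h _

lemma trace_mul_ptr3' (T : Matrix ((ι × κ) × μ) ((ι × κ) × μ) ℂ) (M : Matrix (ι × κ) (ι × κ) ℂ) :
    (T * (M ⊗ₖ (1 : Matrix μ μ ℂ))).trace = (ptr3 T * M).trace := by
  have L : (T * (M ⊗ₖ (1 : Matrix μ μ ℂ))).trace
      = ∑ p : ι × κ, ∑ k : μ, ∑ q : ι × κ, T (p, k) (q, k) * M q p := by
    simp only [Matrix.trace, Matrix.diag, Matrix.mul_apply, kroneckerMap_apply, Matrix.one_apply,
      mul_ite, mul_one, mul_zero, Fintype.sum_prod_type]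
    simp [Finset.sum_ite_eq' Finset.univ]
  have R : (ptr3 T * M).trace = ∑ p : ι × κ, ∑ q : ι × κ, ∑ k : μ, T (p, k) (q, k) * M q p := by
    simp only [Matrix.trace, Matrix.diag, Matrix.mul_apply, ptr3, Finset.sum_mul]
  rw [L, R]
  exact Finset.sum_congr rfl fun p _ => Finset.sum_comm

lemma trace_mul_ptr2' (T : Matrix ((ι × κ) × μ) ((ι × κ) × μ) ℂ) (A : Matrix ι ι ℂ)
    (C : Matrix μ μ ℂ) :
    (T * ((A ⊗ₖ (1 : Matrix κ κ ℂ)) ⊗ₖ C)).trace = (ptr2 T * (A ⊗ₖ C)).trace := by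
  have L : (T * ((A ⊗ₖ (1 : Matrix κ κ ℂ)) ⊗ₖ C)).trace
      = ∑ i : ι, ∑ j : κ, ∑ k : μ, ∑ i' : ι, ∑ k' : μ,
          T ((i, j), k) ((i', j), k') * (A i' i * C k' k) := by
    simp only [Matrix.trace, Matrix.diag, Matrix.mul_apply, kroneckerMap_apply, Matrix.one_apply,
      ite_mul, one_mul, zero_mul, mul_ite, mul_one, mul_zero, Fintype.sum_prod_type]
    simp [Finset.sum_ite_eq' Finset.univ]
  have R : (ptr2 T * (A ⊗ₖ C)).trace
      = ∑ i : ι, ∑ k : μ, ∑ i' : ι, ∑ k' : μ, ∑ j : κ,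
          T ((i, j), k) ((i', j), k') * (A i' i * C k' k) := by
    simp only [Matrix.trace, Matrix.diag, Matrix.mul_apply, ptr2, kroneckerMap_apply,
      Finset.sum_mul, Fintype.sum_prod_type]
  rw [L, R]
  refine Finset.sum_congr rfl fun i _ => ?_
  rw [Finset.sum_comm (f := fun (j : κ) (k : μ) => ∑ i' : ι, ∑ k' : μ,
      T ((i, j), k) ((i', j), k') * (A i' i * C k' k))]
  refine Finset.sum_congr rfl fun k _ => ?_
  rw [Finset.sum_comm (f := fun (j : κ) (i' : ι) => ∑ k' : μ,
      T ((i, j), k) ((i', j), k') * (A i' i * C k' k))]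
  refine Finset.sum_congr rfl fun i' _ => ?_
  exact Finset.sum_comm

lemma trace_mul_ptr1' (T : Matrix ((ι × κ) × μ) ((ι × κ) × μ) ℂ) (B : Matrix κ κ ℂ)
    (C : Matrix μ μ ℂ) :
    (T * (((1 : Matrix ι ι ℂ) ⊗ₖ B) ⊗ₖ C)).trace = (ptr1 T * (B ⊗ₖ C)).trace := by
  have L : (T * (((1 : Matrix ι ι ℂ) ⊗ₖ B) ⊗ₖ C)).trace
      = ∑ i : ι, ∑ j : κ, ∑ k : μ, ∑ j' : κ, ∑ k' : μ,
          T ((i, j), k) ((i, j'), k') * (B j' j * C k' k) := by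
    simp only [Matrix.trace, Matrix.diag, Matrix.mul_apply, kroneckerMap_apply, Matrix.one_apply,
      ite_mul, one_mul, zero_mul, mul_ite, mul_one, mul_zero, Fintype.sum_prod_type]
    simp [Finset.sum_ite_eq' Finset.univ]
  have R : (ptr1 T * (B ⊗ₖ C)).trace
      = ∑ j : κ, ∑ k : μ, ∑ j' : κ, ∑ k' : μ, ∑ i : ι,
          T ((i, j), k) ((i, j'), k') * (B j' j * C k' k) := by
    simp only [Matrix.trace, Matrix.diag, Matrix.mul_apply, ptr1, kroneckerMap_apply,
      Finset.sum_mul, Fintype.sum_prod_type]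
  rw [L, R]
  rw [Finset.sum_comm (f := fun (i : ι) (j : κ) => ∑ k : μ, ∑ j' : κ, ∑ k' : μ,
      T ((i, j), k) ((i, j'), k') * (B j' j * C k' k))]
  refine Finset.sum_congr rfl fun j _ => ?_
  rw [Finset.sum_comm (f := fun (i : ι) (k : μ) => ∑ j' : κ, ∑ k' : μ,
      T ((i, j), k) ((i, j'), k') * (B j' j * C k' k))]
  refine Finset.sum_congr rfl fun k _ => ?_
  rw [Finset.sum_comm (f := fun (i : ι) (j' : κ) => ∑ k' : μ,
      T ((i, j), k) ((i, j'), k') * (B j' j * C k' k))]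
  refine Finset.sum_congr rfl fun j' _ => ?_
  exact Finset.sum_comm

lemma quad_slice1 (A : Matrix ι ι ℂ) (f : κ → ℂ) (u : (ι × κ) × μ → ℂ) :
    star u ⬝ᵥ (((A ⊗ₖ diagonal f) ⊗ₖ (1 : Matrix μ μ ℂ)) *ᵥ u)
      = ∑ j : κ, ∑ k : μ, f j *
          (star (fun i => u ((i, j), k)) ⬝ᵥ (A *ᵥ fun i => u ((i, j), k))) := by
  have L : star u ⬝ᵥ (((A ⊗ₖ diagonal f) ⊗ₖ (1 : Matrix μ μ ℂ)) *ᵥ u)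
      = ∑ i : ι, ∑ j : κ, ∑ k : μ, ∑ i' : ι,
          f j * (starRingEnd ℂ (u ((i, j), k)) * (A i i' * u ((i', j), k))) := by
    simp only [dotProduct, mulVec, kroneckerMap_apply, Matrix.diagonal_apply, Matrix.one_apply,
      Pi.star_apply, RCLike.star_def, ite_mul, zero_mul, mul_ite, mul_one, mul_zero,
      Fintype.sum_prod_type, Finset.mul_sum, Finset.sum_ite_irrel, Finset.sum_const_zero,
      Finset.sum_ite_eq, Finset.sum_ite_eq', Finset.mem_univ, if_true]
    exact Finset.sum_congr rfl fun i _ => Finset.sum_congr rfl fun j _ =>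
      Finset.sum_congr rfl fun k _ => Finset.sum_congr rfl fun i' _ => by ring
  have R : ∑ j : κ, ∑ k : μ, f j *
          (star (fun i => u ((i, j), k)) ⬝ᵥ (A *ᵥ fun i => u ((i, j), k)))
      = ∑ j : κ, ∑ k : μ, ∑ i : ι, ∑ i' : ι,
          f j * (starRingEnd ℂ (u ((i, j), k)) * (A i i' * u ((i', j), k))) := by
    simp only [dotProduct, mulVec, Pi.star_apply, RCLike.star_def, Finset.mul_sum]
  rw [L, R]
  rw [Finset.sum_comm (f := fun (i : ι) (j : κ) => ∑ k : μ, ∑ i' : ι,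
      f j * (starRingEnd ℂ (u ((i, j), k)) * (A i i' * u ((i', j), k))))]
  refine Finset.sum_congr rfl fun j _ => ?_
  exact Finset.sum_comm

lemma quad_slice2 (A : Matrix ι ι ℂ) (g : μ → ℂ) (u : (ι × κ) × μ → ℂ) :
    star u ⬝ᵥ (((A ⊗ₖ (1 : Matrix κ κ ℂ)) ⊗ₖ diagonal g) *ᵥ u)
      = ∑ j : κ, ∑ k : μ, g k *
          (star (fun i => u ((i, j), k)) ⬝ᵥ (A *ᵥ fun i => u ((i, j), k))) := by
  have L : star u ⬝ᵥ (((A ⊗ₖ (1 : Matrix κ κ ℂ)) ⊗ₖ diagonal g) *ᵥ u)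
      = ∑ i : ι, ∑ j : κ, ∑ k : μ, ∑ i' : ι,
          g k * (starRingEnd ℂ (u ((i, j), k)) * (A i i' * u ((i', j), k))) := by
    simp only [dotProduct, mulVec, kroneckerMap_apply, Matrix.diagonal_apply, Matrix.one_apply,
      Pi.star_apply, RCLike.star_def, ite_mul, zero_mul, mul_ite, mul_one, mul_zero,
      Fintype.sum_prod_type, Finset.mul_sum, Finset.sum_ite_irrel, Finset.sum_const_zero,
      Finset.sum_ite_eq, Finset.sum_ite_eq', Finset.mem_univ, if_true]
    exact Finset.sum_congr rfl fun i _ => Finset.sum_congr rfl fun j _ =>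
      Finset.sum_congr rfl fun k _ => Finset.sum_congr rfl fun i' _ => by ring
  have R : ∑ j : κ, ∑ k : μ, g k *
          (star (fun i => u ((i, j), k)) ⬝ᵥ (A *ᵥ fun i => u ((i, j), k)))
      = ∑ j : κ, ∑ k : μ, ∑ i : ι, ∑ i' : ι,
          g k * (starRingEnd ℂ (u ((i, j), k)) * (A i i' * u ((i', j), k))) := by
    simp only [dotProduct, mulVec, Pi.star_apply, RCLike.star_def, Finset.mul_sum]
  rw [L, R]
  rw [Finset.sum_comm (f := fun (i : ι) (j : κ) => ∑ k : μ, ∑ i' : ι,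
      g k * (starRingEnd ℂ (u ((i, j), k)) * (A i i' * u ((i', j), k))))]
  refine Finset.sum_congr rfl fun j _ => ?_
  exact Finset.sum_comm

lemma quad_slice3 (f : ι → ℂ) (C : Matrix μ μ ℂ) (u : (ι × κ) × μ → ℂ) :
    star u ⬝ᵥ (((diagonal f ⊗ₖ (1 : Matrix κ κ ℂ)) ⊗ₖ C) *ᵥ u)
      = ∑ i : ι, ∑ j : κ, f i *
          (star (fun k => u ((i, j), k)) ⬝ᵥ (C *ᵥ fun k => u ((i, j), k))) := by
  have L : star u ⬝ᵥ (((diagonal f ⊗ₖ (1 : Matrix κ κ ℂ)) ⊗ₖ C) *ᵥ u)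
      = ∑ i : ι, ∑ j : κ, ∑ k : μ, ∑ k' : μ,
          f i * (starRingEnd ℂ (u ((i, j), k)) * (C k k' * u ((i, j), k'))) := by
    simp only [dotProduct, mulVec, kroneckerMap_apply, Matrix.diagonal_apply, Matrix.one_apply,
      Pi.star_apply, RCLike.star_def, ite_mul, zero_mul, mul_ite, mul_one, mul_zero,
      Fintype.sum_prod_type, Finset.mul_sum, Finset.sum_ite_irrel, Finset.sum_const_zero,
      Finset.sum_ite_eq, Finset.sum_ite_eq', Finset.mem_univ, if_true]
    exact Finset.sum_congr rfl fun i _ => Finset.sum_congr rfl fun j _ =>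
      Finset.sum_congr rfl fun k _ => Finset.sum_congr rfl fun k' _ => by ring
  have R : ∑ i : ι, ∑ j : κ, f i *
          (star (fun k => u ((i, j), k)) ⬝ᵥ (C *ᵥ fun k => u ((i, j), k)))
      = ∑ i : ι, ∑ j : κ, ∑ k : μ, ∑ k' : μ,
          f i * (starRingEnd ℂ (u ((i, j), k)) * (C k k' * u ((i, j), k'))) := by
    simp only [dotProduct, mulVec, Pi.star_apply, RCLike.star_def, Finset.mul_sum]
  rw [L, R]

lemma quad_slice4 (g : κ → ℂ) (C : Matrix μ μ ℂ) (u : (ι × κ) × μ → ℂ) :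
    star u ⬝ᵥ ((((1 : Matrix ι ι ℂ) ⊗ₖ diagonal g) ⊗ₖ C) *ᵥ u)
      = ∑ i : ι, ∑ j : κ, g j *
          (star (fun k => u ((i, j), k)) ⬝ᵥ (C *ᵥ fun k => u ((i, j), k))) := by
  have L : star u ⬝ᵥ ((((1 : Matrix ι ι ℂ) ⊗ₖ diagonal g) ⊗ₖ C) *ᵥ u)
      = ∑ i : ι, ∑ j : κ, ∑ k : μ, ∑ k' : μ,
          g j * (starRingEnd ℂ (u ((i, j), k)) * (C k k' * u ((i, j), k'))) := by
    simp only [dotProduct, mulVec, kroneckerMap_apply, Matrix.diagonal_apply, Matrix.one_apply,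
      Pi.star_apply, RCLike.star_def, ite_mul, zero_mul, mul_ite, mul_one, mul_zero,
      Fintype.sum_prod_type, Finset.mul_sum, Finset.sum_ite_irrel, Finset.sum_const_zero,
      Finset.sum_ite_eq, Finset.sum_ite_eq', Finset.mem_univ, if_true]
    exact Finset.sum_congr rfl fun i _ => Finset.sum_congr rfl fun j _ =>
      Finset.sum_congr rfl fun k _ => Finset.sum_congr rfl fun k' _ => by ring
  have R : ∑ i : ι, ∑ j : κ, g j *
          (star (fun k => u ((i, j), k)) ⬝ᵥ (C *ᵥ fun k => u ((i, j), k)))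
      = ∑ i : ι, ∑ j : κ, ∑ k : μ, ∑ k' : μ,
          g j * (starRingEnd ℂ (u ((i, j), k)) * (C k k' * u ((i, j), k'))) := by
    simp only [dotProduct, mulVec, Pi.star_apply, RCLike.star_def, Finset.mul_sum]
  rw [L, R]

lemma norm_slice_left (u : (ι × κ) × μ → ℂ) :
    star u ⬝ᵥ u = ∑ j : κ, ∑ k : μ,
      (star (fun i => u ((i, j), k)) ⬝ᵥ (fun i => u ((i, j), k))) := by
  simp only [dotProduct, Pi.star_apply, Fintype.sum_prod_type]
  rw [Finset.sum_comm (f := fun (i : ι) (j : κ) => ∑ k : μ,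
      star (u ((i, j), k)) * u ((i, j), k))]
  refine Finset.sum_congr rfl fun j _ => ?_
  exact Finset.sum_comm

lemma norm_slice_right (u : (ι × κ) × μ → ℂ) :
    star u ⬝ᵥ u = ∑ i : ι, ∑ j : κ,
      (star (fun k => u ((i, j), k)) ⬝ᵥ (fun k => u ((i, j), k))) := by
  simp only [dotProduct, Pi.star_apply, Fintype.sum_prod_type]

end KronHelpers

section QuadBound

variable {ι κ μ : Type*} [Fintype ι] [Fintype κ] [Fintype μ]
variable [DecidableEq ι] [DecidableEq κ] [DecidableEq μ]

lemma quad_bound_left (A₁ A₂ : Matrix ι ι ℂ)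
    (h₁ : ∀ v : ι → ℂ, (star v ⬝ᵥ (A₁ *ᵥ v)).im = 0
        ∧ |(star v ⬝ᵥ (A₁ *ᵥ v)).re| ≤ (star v ⬝ᵥ v).re)
    (h₂ : ∀ v : ι → ℂ, (star v ⬝ᵥ (A₂ *ᵥ v)).im = 0
        ∧ |(star v ⬝ᵥ (A₂ *ᵥ v)).re| ≤ (star v ⬝ᵥ v).re)
    (w : κ → ℝ) (z : μ → ℝ) (hw : ∀ j, |w j| ≤ 1) (hz : ∀ k, |z k| ≤ 1)
    (g₁₁ g₁₂ g₂₁ g₂₂ : ℝ) (hg₁₁ : |g₁₁| ≤ 1) (hg₁₂ : |g₁₂| ≤ 1) (hg₂₁ : |g₂₁| ≤ 1)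
    (hg₂₂ : |g₂₂| ≤ 1) (hcond : g₁₁ * g₁₂ = -(g₂₁ * g₂₂)) :
    ∀ u : (ι × κ) × μ → ℂ, ‖star u ⬝ᵥ ((
        (g₁₁ : ℂ) • ((A₁ ⊗ₖ diagonal (fun j => ((w j : ℝ) : ℂ))) ⊗ₖ (1 : Matrix μ μ ℂ))
      + (g₁₂ : ℂ) • ((A₁ ⊗ₖ (1 : Matrix κ κ ℂ)) ⊗ₖ diagonal (fun k => ((z k : ℝ) : ℂ)))
      + (g₂₁ : ℂ) • ((A₂ ⊗ₖ diagonal (fun j => ((w j : ℝ) : ℂ))) ⊗ₖ (1 : Matrix μ μ ℂ))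
      + (g₂₂ : ℂ) • ((A₂ ⊗ₖ (1 : Matrix κ κ ℂ)) ⊗ₖ diagonal (fun k => ((z k : ℝ) : ℂ)))) *ᵥ u)‖
      ≤ 2 * (star u ⬝ᵥ u).re := by
  intro u
  have key : star u ⬝ᵥ ((
        (g₁₁ : ℂ) • ((A₁ ⊗ₖ diagonal (fun j => ((w j : ℝ) : ℂ))) ⊗ₖ (1 : Matrix μ μ ℂ))
      + (g₁₂ : ℂ) • ((A₁ ⊗ₖ (1 : Matrix κ κ ℂ)) ⊗ₖ diagonal (fun k => ((z k : ℝ) : ℂ)))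
      + (g₂₁ : ℂ) • ((A₂ ⊗ₖ diagonal (fun j => ((w j : ℝ) : ℂ))) ⊗ₖ (1 : Matrix μ μ ℂ))
      + (g₂₂ : ℂ) • ((A₂ ⊗ₖ (1 : Matrix κ κ ℂ)) ⊗ₖ diagonal (fun k => ((z k : ℝ) : ℂ)))) *ᵥ u)
      = ∑ j : κ, ∑ k : μ,
        (((g₁₁ * w j + g₁₂ * z k : ℝ) : ℂ)
            * (star (fun i => u ((i, j), k)) ⬝ᵥ (A₁ *ᵥ fun i => u ((i, j), k)))
          + ((g₂₁ * w j + g₂₂ * z k : ℝ) : ℂ)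
            * (star (fun i => u ((i, j), k)) ⬝ᵥ (A₂ *ᵥ fun i => u ((i, j), k)))) := by
    rw [Matrix.add_mulVec, Matrix.add_mulVec, Matrix.add_mulVec, Matrix.smul_mulVec,
      Matrix.smul_mulVec, Matrix.smul_mulVec, Matrix.smul_mulVec,
      dotProduct_add, dotProduct_add, dotProduct_add, dotProduct_smul, dotProduct_smul,
      dotProduct_smul, dotProduct_smul, quad_slice1, quad_slice2, quad_slice1, quad_slice2]
    simp only [Finset.smul_sum, ← Finset.sum_add_distrib]
    refine Finset.sum_congr rfl fun j _ => Finset.sum_congr rfl fun k _ => ?_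
    push_cast
    simp only [smul_eq_mul]
    ring
  rw [key]
  have hnorm : (star u ⬝ᵥ u).re = ∑ j : κ, ∑ k : μ,
      (star (fun i => u ((i, j), k)) ⬝ᵥ (fun i => u ((i, j), k))).re := by
    rw [norm_slice_left, Complex.re_sum]
    exact Finset.sum_congr rfl fun j _ => by rw [Complex.re_sum]
  rw [hnorm, Finset.mul_sum]
  refine le_trans (norm_sum_le _ _) (Finset.sum_le_sum fun j _ => ?_)
  rw [Finset.mul_sum]
  refine le_trans (norm_sum_le _ _) (Finset.sum_le_sum fun k _ => ?_)
  have hab : |g₁₁ * w j + g₁₂ * z k| + |g₂₁ * w j + g₂₂ * z k| ≤ 2 := by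
    refine chsh_scalar ?_ ?_ ?_ ?_ (by linear_combination (w j * z k) * hcond)
    · rw [abs_mul]; exact mul_le_one₀ hg₁₁ (abs_nonneg _) (hw j)
    · rw [abs_mul]; exact mul_le_one₀ hg₁₂ (abs_nonneg _) (hz k)
    · rw [abs_mul]; exact mul_le_one₀ hg₂₁ (abs_nonneg _) (hw j)
    · rw [abs_mul]; exact mul_le_one₀ hg₂₂ (abs_nonneg _) (hz k)
  exact bracket_bound _ _ _ _ _ (h₁ _).1 (h₁ _).2 (h₂ _).1 (h₂ _).2 hab

lemma quad_bound_right (B₁ B₂ : Matrix μ μ ℂ)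
    (h₁ : ∀ v : μ → ℂ, (star v ⬝ᵥ (B₁ *ᵥ v)).im = 0
        ∧ |(star v ⬝ᵥ (B₁ *ᵥ v)).re| ≤ (star v ⬝ᵥ v).re)
    (h₂ : ∀ v : μ → ℂ, (star v ⬝ᵥ (B₂ *ᵥ v)).im = 0
        ∧ |(star v ⬝ᵥ (B₂ *ᵥ v)).re| ≤ (star v ⬝ᵥ v).re)
    (w : ι → ℝ) (z : κ → ℝ) (hw : ∀ i, |w i| ≤ 1) (hz : ∀ j, |z j| ≤ 1)
    (g₁₁ g₁₂ g₂₁ g₂₂ : ℝ) (hg₁₁ : |g₁₁| ≤ 1) (hg₁₂ : |g₁₂| ≤ 1) (hg₂₁ : |g₂₁| ≤ 1)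
    (hg₂₂ : |g₂₂| ≤ 1) (hcond : g₁₁ * g₂₁ = -(g₁₂ * g₂₂)) :
    ∀ u : (ι × κ) × μ → ℂ, ‖star u ⬝ᵥ ((
        (g₁₁ : ℂ) • ((diagonal (fun i => ((w i : ℝ) : ℂ)) ⊗ₖ (1 : Matrix κ κ ℂ)) ⊗ₖ B₁)
      + (g₁₂ : ℂ) • ((diagonal (fun i => ((w i : ℝ) : ℂ)) ⊗ₖ (1 : Matrix κ κ ℂ)) ⊗ₖ B₂)
      + (g₂₁ : ℂ) • (((1 : Matrix ι ι ℂ) ⊗ₖ diagonal (fun j => ((z j : ℝ) : ℂ))) ⊗ₖ B₁)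
      + (g₂₂ : ℂ) • (((1 : Matrix ι ι ℂ) ⊗ₖ diagonal (fun j => ((z j : ℝ) : ℂ))) ⊗ₖ B₂)) *ᵥ u)‖
      ≤ 2 * (star u ⬝ᵥ u).re := by
  intro u
  have key : star u ⬝ᵥ ((
        (g₁₁ : ℂ) • ((diagonal (fun i => ((w i : ℝ) : ℂ)) ⊗ₖ (1 : Matrix κ κ ℂ)) ⊗ₖ B₁)
      + (g₁₂ : ℂ) • ((diagonal (fun i => ((w i : ℝ) : ℂ)) ⊗ₖ (1 : Matrix κ κ ℂ)) ⊗ₖ B₂)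
      + (g₂₁ : ℂ) • (((1 : Matrix ι ι ℂ) ⊗ₖ diagonal (fun j => ((z j : ℝ) : ℂ))) ⊗ₖ B₁)
      + (g₂₂ : ℂ) • (((1 : Matrix ι ι ℂ) ⊗ₖ diagonal (fun j => ((z j : ℝ) : ℂ))) ⊗ₖ B₂)) *ᵥ u)
      = ∑ i : ι, ∑ j : κ,
        (((g₁₁ * w i + g₂₁ * z j : ℝ) : ℂ)
            * (star (fun k => u ((i, j), k)) ⬝ᵥ (B₁ *ᵥ fun k => u ((i, j), k)))
          + ((g₁₂ * w i + g₂₂ * z j : ℝ) : ℂ)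
            * (star (fun k => u ((i, j), k)) ⬝ᵥ (B₂ *ᵥ fun k => u ((i, j), k)))) := by
    rw [Matrix.add_mulVec, Matrix.add_mulVec, Matrix.add_mulVec, Matrix.smul_mulVec,
      Matrix.smul_mulVec, Matrix.smul_mulVec, Matrix.smul_mulVec,
      dotProduct_add, dotProduct_add, dotProduct_add, dotProduct_smul, dotProduct_smul,
      dotProduct_smul, dotProduct_smul, quad_slice3, quad_slice3, quad_slice4, quad_slice4]
    simp only [Finset.smul_sum, ← Finset.sum_add_distrib]
    refine Finset.sum_congr rfl fun i _ => Finset.sum_congr rfl fun j _ => ?_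
    push_cast
    simp only [smul_eq_mul]
    ring
  rw [key]
  have hnorm : (star u ⬝ᵥ u).re = ∑ i : ι, ∑ j : κ,
      (star (fun k => u ((i, j), k)) ⬝ᵥ (fun k => u ((i, j), k))).re := by
    rw [norm_slice_right, Complex.re_sum]
    exact Finset.sum_congr rfl fun i _ => by rw [Complex.re_sum]
  rw [hnorm, Finset.mul_sum]
  refine le_trans (norm_sum_le _ _) (Finset.sum_le_sum fun i _ => ?_)
  rw [Finset.mul_sum]
  refine le_trans (norm_sum_le _ _) (Finset.sum_le_sum fun j _ => ?_)
  have hab : |g₁₁ * w i + g₂₁ * z j| + |g₁₂ * w i + g₂₂ * z j| ≤ 2 := by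
    refine chsh_scalar ?_ ?_ ?_ ?_ (by linear_combination (w i * z j) * hcond)
    · rw [abs_mul]; exact mul_le_one₀ hg₁₁ (abs_nonneg _) (hw i)
    · rw [abs_mul]; exact mul_le_one₀ hg₂₁ (abs_nonneg _) (hz j)
    · rw [abs_mul]; exact mul_le_one₀ hg₁₂ (abs_nonneg _) (hw i)
    · rw [abs_mul]; exact mul_le_one₀ hg₂₂ (abs_nonneg _) (hz j)
  exact bracket_bound _ _ _ _ _ (h₁ _).1 (h₁ _).2 (h₂ _).1 (h₂ _).2 hab

end QuadBound

/-- the quantum CHSH-form inequalities (35) and (36). `Tabs.trace` (resp.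
`Sabs.trace`) is the trace norm of the source-operator `T` (resp. `S`). -/
theorem chsh_form_inequalities {d₁ d₂ : ℕ}
    (ρ : Matrix (Fin d₁ × Fin d₂) (Fin d₁ × Fin d₂) ℂ) (hρ : IsDensityMatrix ρ)
    (γ₁₁ γ₁₂ γ₂₁ γ₂₂ : ℝ)
    (hγ₁₁ : |γ₁₁| ≤ 1) (hγ₁₂ : |γ₁₂| ≤ 1) (hγ₂₁ : |γ₂₁| ≤ 1) (hγ₂₂ : |γ₂₂| ≤ 1)
    (A₁ A₂ : Matrix (Fin d₁) (Fin d₁) ℂ) (B₁ B₂ : Matrix (Fin d₂) (Fin d₂) ℂ)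
    (hA₁ : A₁.IsHermitian) (hA₂ : A₂.IsHermitian) (hB₁ : B₁.IsHermitian) (hB₂ : B₂.IsHermitian)
    (hnA₁ : opNorm A₁ ≤ 1) (hnA₂ : opNorm A₂ ≤ 1) (hnB₁ : opNorm B₁ ≤ 1) (hnB₂ : opNorm B₂ ≤ 1) :
    (∀ (T Tabs : Matrix ((Fin d₁ × Fin d₂) × Fin d₂) ((Fin d₁ × Fin d₂) × Fin d₂) ℂ),
      γ₁₁ * γ₁₂ = -(γ₂₁ * γ₂₂) → IsSource122 ρ T →
      Tabs.PosSemidef → Tabs * Tabs = T * T →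
      ‖(γ₁₁ : ℂ) * (ρ * (A₁ ⊗ₖ B₁)).trace + (γ₁₂ : ℂ) * (ρ * (A₁ ⊗ₖ B₂)).trace
          + (γ₂₁ : ℂ) * (ρ * (A₂ ⊗ₖ B₁)).trace + (γ₂₂ : ℂ) * (ρ * (A₂ ⊗ₖ B₂)).trace‖
        ≤ 2 * Tabs.trace.re)
    ∧ (∀ (S Sabs : Matrix ((Fin d₁ × Fin d₁) × Fin d₂) ((Fin d₁ × Fin d₁) × Fin d₂) ℂ),
      γ₁₁ * γ₂₁ = -(γ₁₂ * γ₂₂) → IsSource112 ρ S →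
      Sabs.PosSemidef → Sabs * Sabs = S * S →
      ‖(γ₁₁ : ℂ) * (ρ * (A₁ ⊗ₖ B₁)).trace + (γ₁₂ : ℂ) * (ρ * (A₁ ⊗ₖ B₂)).trace
          + (γ₂₁ : ℂ) * (ρ * (A₂ ⊗ₖ B₁)).trace + (γ₂₂ : ℂ) * (ρ * (A₂ ⊗ₖ B₂)).trace‖
        ≤ 2 * Sabs.trace.re) := by
  constructor
  · intro T Tabs hcond hsrc hTabsPsd hsq
    obtain ⟨hTherm, hp2, hp3⟩ := hsrc
    set U₂ : Matrix (Fin d₂) (Fin d₂) ℂ := (hB₁.eigenvectorUnitary : Matrix (Fin d₂) (Fin d₂) ℂ)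
      with hU₂def
    set U₃ : Matrix (Fin d₂) (Fin d₂) ℂ := (hB₂.eigenvectorUnitary : Matrix (Fin d₂) (Fin d₂) ℂ)
      with hU₃def
    set w := hB₁.eigenvalues with hwdef
    set z := hB₂.eigenvalues with hzdef
    have hU₂l : U₂ᴴ * U₂ = 1 := by
      rw [← Matrix.star_eq_conjTranspose]
      exact ((Unitary.mem_iff).mp hB₁.eigenvectorUnitary.2).1
    have hU₂r : U₂ * U₂ᴴ = 1 := by
      rw [← Matrix.star_eq_conjTranspose]
      exact ((Unitary.mem_iff).mp hB₁.eigenvectorUnitary.2).2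
    have hU₃l : U₃ᴴ * U₃ = 1 := by
      rw [← Matrix.star_eq_conjTranspose]
      exact ((Unitary.mem_iff).mp hB₂.eigenvectorUnitary.2).1
    have hU₃r : U₃ * U₃ᴴ = 1 := by
      rw [← Matrix.star_eq_conjTranspose]
      exact ((Unitary.mem_iff).mp hB₂.eigenvectorUnitary.2).2
    have hB₁diag : U₂ᴴ * B₁ * U₂ = Matrix.diagonal (fun j => ((w j : ℝ) : ℂ)) := by
      rw [← Matrix.star_eq_conjTranspose]
      have h := hB₁.conjStarAlgAut_star_eigenvectorUnitary
      rw [Unitary.conjStarAlgAut_star_apply] at h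
      exact h
    have hB₂diag : U₃ᴴ * B₂ * U₃ = Matrix.diagonal (fun k => ((z k : ℝ) : ℂ)) := by
      rw [← Matrix.star_eq_conjTranspose]
      have h := hB₂.conjStarAlgAut_star_eigenvectorUnitary
      rw [Unitary.conjStarAlgAut_star_apply] at h
      exact h
    have hwb : ∀ j, |w j| ≤ 1 := by
      intro j
      have h1 := (quadform_bounds hB₁ hnB₁ (fun a => U₂ a j)).2
      rw [quad_col, col_norm, hB₁diag, hU₂l] at h1
      simpa using h1
    have hzb : ∀ k, |z k| ≤ 1 := by
      intro k
      have h1 := (quadform_bounds hB₂ hnB₂ (fun a => U₃ a k)).2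
      rw [quad_col, col_norm, hB₂diag, hU₃l] at h1
      simpa using h1
    set X := (γ₁₁ : ℂ) • ((A₁ ⊗ₖ B₁) ⊗ₖ (1 : Matrix (Fin d₂) (Fin d₂) ℂ))
        + (γ₁₂ : ℂ) • ((A₁ ⊗ₖ (1 : Matrix (Fin d₂) (Fin d₂) ℂ)) ⊗ₖ B₂)
        + (γ₂₁ : ℂ) • ((A₂ ⊗ₖ B₁) ⊗ₖ (1 : Matrix (Fin d₂) (Fin d₂) ℂ))
        + (γ₂₂ : ℂ) • ((A₂ ⊗ₖ (1 : Matrix (Fin d₂) (Fin d₂) ℂ)) ⊗ₖ B₂) with hXdef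
    set M := (γ₁₁ : ℂ) • ((A₁ ⊗ₖ Matrix.diagonal (fun j => ((w j : ℝ) : ℂ)))
          ⊗ₖ (1 : Matrix (Fin d₂) (Fin d₂) ℂ))
        + (γ₁₂ : ℂ) • ((A₁ ⊗ₖ (1 : Matrix (Fin d₂) (Fin d₂) ℂ))
          ⊗ₖ Matrix.diagonal (fun k => ((z k : ℝ) : ℂ)))
        + (γ₂₁ : ℂ) • ((A₂ ⊗ₖ Matrix.diagonal (fun j => ((w j : ℝ) : ℂ)))
          ⊗ₖ (1 : Matrix (Fin d₂) (Fin d₂) ℂ))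
        + (γ₂₂ : ℂ) • ((A₂ ⊗ₖ (1 : Matrix (Fin d₂) (Fin d₂) ℂ))
          ⊗ₖ Matrix.diagonal (fun k => ((z k : ℝ) : ℂ))) with hMdef
    have hWu : (((1 : Matrix (Fin d₁) (Fin d₁) ℂ) ⊗ₖ U₂) ⊗ₖ U₃)
        * (((1 : Matrix (Fin d₁) (Fin d₁) ℂ) ⊗ₖ U₂) ⊗ₖ U₃)ᴴ = 1 :=
      kron_unitary _ _ _ (by simp) hU₂r hU₃r
    have hconj : (((1 : Matrix (Fin d₁) (Fin d₁) ℂ) ⊗ₖ U₂) ⊗ₖ U₃)ᴴ * X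
        * (((1 : Matrix (Fin d₁) (Fin d₁) ℂ) ⊗ₖ U₂) ⊗ₖ U₃) = M := by
      rw [hXdef, hMdef]
      simp only [Matrix.mul_add, Matrix.add_mul, Matrix.mul_smul, Matrix.smul_mul]
      rw [conj_kron, conj_kron, conj_kron, conj_kron, hB₁diag, hB₂diag]
      simp only [Matrix.conjTranspose_one, Matrix.one_mul, Matrix.mul_one, hU₂l, hU₃l]
    have hXq := quad_all X M _ hWu (unconj _ X M hWu hconj)
      (quad_bound_left A₁ A₂ (quadform_bounds hA₁ hnA₁) (quadform_bounds hA₂ hnA₂)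
        w z hwb hzb γ₁₁ γ₁₂ γ₂₁ γ₂₂ hγ₁₁ hγ₁₂ hγ₂₁ hγ₂₂ hcond)
    have e11 : (ρ * (A₁ ⊗ₖ B₁)).trace
        = (T * ((A₁ ⊗ₖ B₁) ⊗ₖ (1 : Matrix (Fin d₂) (Fin d₂) ℂ))).trace := by
      rw [trace_mul_ptr3', hp3]
    have e21 : (ρ * (A₂ ⊗ₖ B₁)).trace
        = (T * ((A₂ ⊗ₖ B₁) ⊗ₖ (1 : Matrix (Fin d₂) (Fin d₂) ℂ))).trace := by
      rw [trace_mul_ptr3', hp3]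
    have e12 : (ρ * (A₁ ⊗ₖ B₂)).trace
        = (T * ((A₁ ⊗ₖ (1 : Matrix (Fin d₂) (Fin d₂) ℂ)) ⊗ₖ B₂)).trace := by
      rw [trace_mul_ptr2', hp2]
    have e22 : (ρ * (A₂ ⊗ₖ B₂)).trace
        = (T * ((A₂ ⊗ₖ (1 : Matrix (Fin d₂) (Fin d₂) ℂ)) ⊗ₖ B₂)).trace := by
      rw [trace_mul_ptr2', hp2]
    rw [e11, e12, e21, e22]
    have hgoal : (γ₁₁ : ℂ) * (T * ((A₁ ⊗ₖ B₁) ⊗ₖ (1 : Matrix (Fin d₂) (Fin d₂) ℂ))).trace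
        + (γ₁₂ : ℂ) * (T * ((A₁ ⊗ₖ (1 : Matrix (Fin d₂) (Fin d₂) ℂ)) ⊗ₖ B₂)).trace
        + (γ₂₁ : ℂ) * (T * ((A₂ ⊗ₖ B₁) ⊗ₖ (1 : Matrix (Fin d₂) (Fin d₂) ℂ))).trace
        + (γ₂₂ : ℂ) * (T * ((A₂ ⊗ₖ (1 : Matrix (Fin d₂) (Fin d₂) ℂ)) ⊗ₖ B₂)).trace
        = (T * X).trace := by
      rw [hXdef]
      simp only [Matrix.mul_add, Matrix.mul_smul, Matrix.trace_add, Matrix.trace_smul,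
        smul_eq_mul]
    rw [hgoal]
    exact trace_bound T Tabs X hTherm hTabsPsd hsq hXq
  · intro S Sabs hcond hsrc hSabsPsd hsq
    obtain ⟨hSherm, hp1, hp2⟩ := hsrc
    set U₁ : Matrix (Fin d₁) (Fin d₁) ℂ := (hA₁.eigenvectorUnitary : Matrix (Fin d₁) (Fin d₁) ℂ)
      with hU₁def
    set U₂ : Matrix (Fin d₁) (Fin d₁) ℂ := (hA₂.eigenvectorUnitary : Matrix (Fin d₁) (Fin d₁) ℂ)
      with hU₂def
    set w := hA₁.eigenvalues with hwdef
    set z := hA₂.eigenvalues with hzdef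
    have hU₁l : U₁ᴴ * U₁ = 1 := by
      rw [← Matrix.star_eq_conjTranspose]
      exact ((Unitary.mem_iff).mp hA₁.eigenvectorUnitary.2).1
    have hU₁r : U₁ * U₁ᴴ = 1 := by
      rw [← Matrix.star_eq_conjTranspose]
      exact ((Unitary.mem_iff).mp hA₁.eigenvectorUnitary.2).2
    have hU₂l : U₂ᴴ * U₂ = 1 := by
      rw [← Matrix.star_eq_conjTranspose]
      exact ((Unitary.mem_iff).mp hA₂.eigenvectorUnitary.2).1
    have hU₂r : U₂ * U₂ᴴ = 1 := by
      rw [← Matrix.star_eq_conjTranspose]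
      exact ((Unitary.mem_iff).mp hA₂.eigenvectorUnitary.2).2
    have hA₁diag : U₁ᴴ * A₁ * U₁ = Matrix.diagonal (fun i => ((w i : ℝ) : ℂ)) := by
      rw [← Matrix.star_eq_conjTranspose]
      have h := hA₁.conjStarAlgAut_star_eigenvectorUnitary
      rw [Unitary.conjStarAlgAut_star_apply] at h
      exact h
    have hA₂diag : U₂ᴴ * A₂ * U₂ = Matrix.diagonal (fun i => ((z i : ℝ) : ℂ)) := by
      rw [← Matrix.star_eq_conjTranspose]
      have h := hA₂.conjStarAlgAut_star_eigenvectorUnitary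
      rw [Unitary.conjStarAlgAut_star_apply] at h
      exact h
    have hwb : ∀ i, |w i| ≤ 1 := by
      intro i
      have h1 := (quadform_bounds hA₁ hnA₁ (fun a => U₁ a i)).2
      rw [quad_col, col_norm, hA₁diag, hU₁l] at h1
      simpa using h1
    have hzb : ∀ i, |z i| ≤ 1 := by
      intro i
      have h1 := (quadform_bounds hA₂ hnA₂ (fun a => U₂ a i)).2
      rw [quad_col, col_norm, hA₂diag, hU₂l] at h1
      simpa using h1
    set X := (γ₁₁ : ℂ) • ((A₁ ⊗ₖ (1 : Matrix (Fin d₁) (Fin d₁) ℂ)) ⊗ₖ B₁)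
        + (γ₁₂ : ℂ) • ((A₁ ⊗ₖ (1 : Matrix (Fin d₁) (Fin d₁) ℂ)) ⊗ₖ B₂)
        + (γ₂₁ : ℂ) • (((1 : Matrix (Fin d₁) (Fin d₁) ℂ) ⊗ₖ A₂) ⊗ₖ B₁)
        + (γ₂₂ : ℂ) • (((1 : Matrix (Fin d₁) (Fin d₁) ℂ) ⊗ₖ A₂) ⊗ₖ B₂) with hXdef
    set M := (γ₁₁ : ℂ) • ((Matrix.diagonal (fun i => ((w i : ℝ) : ℂ))
          ⊗ₖ (1 : Matrix (Fin d₁) (Fin d₁) ℂ)) ⊗ₖ B₁)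
        + (γ₁₂ : ℂ) • ((Matrix.diagonal (fun i => ((w i : ℝ) : ℂ))
          ⊗ₖ (1 : Matrix (Fin d₁) (Fin d₁) ℂ)) ⊗ₖ B₂)
        + (γ₂₁ : ℂ) • (((1 : Matrix (Fin d₁) (Fin d₁) ℂ)
          ⊗ₖ Matrix.diagonal (fun i => ((z i : ℝ) : ℂ))) ⊗ₖ B₁)
        + (γ₂₂ : ℂ) • (((1 : Matrix (Fin d₁) (Fin d₁) ℂ)
          ⊗ₖ Matrix.diagonal (fun i => ((z i : ℝ) : ℂ))) ⊗ₖ B₂) with hMdef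
    have hWu : ((U₁ ⊗ₖ U₂) ⊗ₖ (1 : Matrix (Fin d₂) (Fin d₂) ℂ))
        * ((U₁ ⊗ₖ U₂) ⊗ₖ (1 : Matrix (Fin d₂) (Fin d₂) ℂ))ᴴ = 1 :=
      kron_unitary _ _ _ hU₁r hU₂r (by simp)
    have hconj : ((U₁ ⊗ₖ U₂) ⊗ₖ (1 : Matrix (Fin d₂) (Fin d₂) ℂ))ᴴ * X
        * ((U₁ ⊗ₖ U₂) ⊗ₖ (1 : Matrix (Fin d₂) (Fin d₂) ℂ)) = M := by
      rw [hXdef, hMdef]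
      simp only [Matrix.mul_add, Matrix.add_mul, Matrix.mul_smul, Matrix.smul_mul]
      rw [conj_kron, conj_kron, conj_kron, conj_kron, hA₁diag, hA₂diag]
      simp only [Matrix.conjTranspose_one, Matrix.one_mul, Matrix.mul_one, hU₁l, hU₂l]
    have hXq := quad_all X M _ hWu (unconj _ X M hWu hconj)
      (quad_bound_right B₁ B₂ (quadform_bounds hB₁ hnB₁) (quadform_bounds hB₂ hnB₂)
        w z hwb hzb γ₁₁ γ₁₂ γ₂₁ γ₂₂ hγ₁₁ hγ₁₂ hγ₂₁ hγ₂₂ hcond)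
    have e11 : (ρ * (A₁ ⊗ₖ B₁)).trace
        = (S * ((A₁ ⊗ₖ (1 : Matrix (Fin d₁) (Fin d₁) ℂ)) ⊗ₖ B₁)).trace := by
      rw [trace_mul_ptr2', hp2]
    have e12 : (ρ * (A₁ ⊗ₖ B₂)).trace
        = (S * ((A₁ ⊗ₖ (1 : Matrix (Fin d₁) (Fin d₁) ℂ)) ⊗ₖ B₂)).trace := by
      rw [trace_mul_ptr2', hp2]
    have e21 : (ρ * (A₂ ⊗ₖ B₁)).trace
        = (S * (((1 : Matrix (Fin d₁) (Fin d₁) ℂ) ⊗ₖ A₂) ⊗ₖ B₁)).trace := by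
      rw [trace_mul_ptr1', hp1]
    have e22 : (ρ * (A₂ ⊗ₖ B₂)).trace
        = (S * (((1 : Matrix (Fin d₁) (Fin d₁) ℂ) ⊗ₖ A₂) ⊗ₖ B₂)).trace := by
      rw [trace_mul_ptr1', hp1]
    rw [e11, e12, e21, e22]
    have hgoal : (γ₁₁ : ℂ) * (S * ((A₁ ⊗ₖ (1 : Matrix (Fin d₁) (Fin d₁) ℂ)) ⊗ₖ B₁)).trace
        + (γ₁₂ : ℂ) * (S * ((A₁ ⊗ₖ (1 : Matrix (Fin d₁) (Fin d₁) ℂ)) ⊗ₖ B₂)).trace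
        + (γ₂₁ : ℂ) * (S * (((1 : Matrix (Fin d₁) (Fin d₁) ℂ) ⊗ₖ A₂) ⊗ₖ B₁)).trace
        + (γ₂₂ : ℂ) * (S * (((1 : Matrix (Fin d₁) (Fin d₁) ℂ) ⊗ₖ A₂) ⊗ₖ B₂)).trace
        = (S * X).trace := by
      rw [hXdef]
      simp only [Matrix.mul_add, Matrix.mul_smul, Matrix.trace_add, Matrix.trace_smul,
        smul_eq_mul]
    rw [hgoal]
    exact trace_bound S Sabs X hSherm hSabsPsd hsq hXq


end BellPaper
end
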